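/- For fixed B, C ∈ ℝ^{n×r} and a ∈ ℝⁿ, the map s ↦ f(Ẽ(B,C,s,a)) is Fréchet differentiable at every s ∈ ℝⁿ, with derivative given by the linear map v ↦ Σ_{i=1}^{n} (Δ₁)_{ii} v_i, where Δ₁ ∈ ℝ^{n×n} consists of the first n columns of Δ(Ẽ(B,C,s,a)) = (1/N)(D − exp(Ẽ(B,C,s,a) Π̃)) Π̃ᵀ (exp applied entrywise); i.e., the gradient with respect to s is the diagonal of Δ₁. -/

import Mathlib

open Matrix

/-- For fixed `B, C, a`, the map `s ↦ f(Ẽ(B,C,s,a))` is Fréchet differentiable, with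
gradient the diagonal of `Δ₁`. -/
theorem loglik_hasFDerivAt_s
    (n N r : ℕ) (hn : 0 < n) (hN : 0 < N) (hr : 0 < r)
    (D : Matrix (Fin n) (Fin N) ℝ)
    (Pit : Matrix (Fin (n + 1)) (Fin N) ℝ)
    (f : Matrix (Fin n) (Fin (n + 1)) ℝ → ℝ)
    (hf : ∀ E : Matrix (Fin n) (Fin (n + 1)) ℝ,
      f E = (1 / (N : ℝ)) * ∑ i : Fin n, ∑ j : Fin N,
        (D i j * (E * Pit) i j - Real.exp ((E * Pit) i j)))
    (Etil : Matrix (Fin n) (Fin r) ℝ → Matrix (Fin n) (Fin r) ℝ →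
      (Fin n → ℝ) → (Fin n → ℝ) → Matrix (Fin n) (Fin (n + 1)) ℝ)
    (hEtil : ∀ B C s a,
      (∀ (i : Fin n) (j : Fin n),
        Etil B C s a i (Fin.castSucc j) = (B * Cᵀ + Matrix.diagonal s) i j) ∧
      (∀ i : Fin n, Etil B C s a i (Fin.last n) = a i))
    (B C : Matrix (Fin n) (Fin r) ℝ) (s a : Fin n → ℝ)
    (Δ : Matrix (Fin n) (Fin (n + 1)) ℝ)
    (hΔ : Δ = (1 / (N : ℝ)) • ((D - (Etil B C s a * Pit).map Real.exp) * Pitᵀ))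
    (Δ₁ : Matrix (Fin n) (Fin n) ℝ)
    (hΔ₁ : ∀ (i : Fin n) (j : Fin n), Δ₁ i j = Δ i (Fin.castSucc j))
    (L : (Fin n → ℝ) →L[ℝ] ℝ)
    (hL : ∀ v : Fin n → ℝ, L v = ∑ i : Fin n, Δ₁ i i * v i) :
    HasFDerivAt (fun s0 : Fin n → ℝ => f (Etil B C s0 a)) L s := by
  classical
  -- abbreviations
  set p : Fin n → Fin N → ℝ := fun i j => Pit (Fin.castSucc i) j with hp
  set c : Fin n → Fin N → ℝ := fun i j =>
    (∑ k : Fin n, (B * Cᵀ) i k * Pit (Fin.castSucc k) j) + a i * Pit (Fin.last n) j with hc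
  have key : ∀ (s0 : Fin n → ℝ) (i : Fin n) (j : Fin N),
      (Etil B C s0 a * Pit) i j = c i j + s0 i * p i j := by
    intro s0 i j
    obtain ⟨h1, h2⟩ := hEtil B C s0 a
    rw [Matrix.mul_apply, Fin.sum_univ_castSucc]
    simp only [h1, h2, Matrix.add_apply, Matrix.diagonal_apply, hc, hp]
    rw [Finset.sum_congr rfl (fun k _ => add_mul _ _ _), Finset.sum_add_distrib]
    simp [ite_mul, Finset.sum_ite_eq]
    ring
  -- derivative of each term
  have hterm : ∀ (i : Fin n) (j : Fin N),
      HasFDerivAt (fun s0 : Fin n → ℝ =>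
        D i j * (c i j + s0 i * p i j) - Real.exp (c i j + s0 i * p i j))
        (((D i j - Real.exp (c i j + s i * p i j)) * p i j) •
          (ContinuousLinearMap.proj i : (Fin n → ℝ) →L[ℝ] ℝ)) s := by
    intro i j
    have hπ : HasFDerivAt (fun s0 : Fin n → ℝ => s0 i)
        (ContinuousLinearMap.proj i : (Fin n → ℝ) →L[ℝ] ℝ) s :=
      (ContinuousLinearMap.proj i : (Fin n → ℝ) →L[ℝ] ℝ).hasFDerivAt
    have hinner : HasFDerivAt (fun s0 : Fin n → ℝ => c i j + s0 i * p i j)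
        ((p i j) • (ContinuousLinearMap.proj i : (Fin n → ℝ) →L[ℝ] ℝ)) s :=
      ((hπ.mul_const (p i j)).const_add (c i j))
    have h1 := hinner.const_mul (D i j)
    have h2 := hinner.exp
    have := h1.sub h2
    refine this.congr_fderiv ?_
    ext v
    simp [ContinuousLinearMap.smul_apply, smul_smul]
    ring
  -- derivative of the full sum
  have hsum : HasFDerivAt (fun s0 : Fin n → ℝ => (1 / (N : ℝ)) * ∑ i : Fin n, ∑ j : Fin N,
        (D i j * (c i j + s0 i * p i j) - Real.exp (c i j + s0 i * p i j)))
      ((1 / (N : ℝ)) • ∑ i : Fin n, ∑ j : Fin N,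
        (((D i j - Real.exp (c i j + s i * p i j)) * p i j) •
          (ContinuousLinearMap.proj i : (Fin n → ℝ) →L[ℝ] ℝ))) s := by
    refine HasFDerivAt.const_mul ?_ (1 / (N : ℝ))
    refine HasFDerivAt.fun_sum fun i _ => ?_
    exact HasFDerivAt.fun_sum fun j _ => hterm i j
  -- identify the function
  have hfun : (fun s0 : Fin n → ℝ => f (Etil B C s0 a)) =
      (fun s0 : Fin n → ℝ => (1 / (N : ℝ)) * ∑ i : Fin n, ∑ j : Fin N,
        (D i j * (c i j + s0 i * p i j) - Real.exp (c i j + s0 i * p i j))) := by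
    funext s0
    rw [hf]
    congr 1
    refine Finset.sum_congr rfl fun i _ => Finset.sum_congr rfl fun j _ => ?_
    rw [key s0 i j]
  -- identify the derivative
  have hLeq : L = (1 / (N : ℝ)) • ∑ i : Fin n, ∑ j : Fin N,
      (((D i j - Real.exp (c i j + s i * p i j)) * p i j) •
        (ContinuousLinearMap.proj i : (Fin n → ℝ) →L[ℝ] ℝ)) := by
    ext v
    rw [hL]
    have hdiag : ∀ i : Fin n, Δ₁ i i =
        (1 / (N : ℝ)) * ∑ j : Fin N, (D i j - Real.exp (c i j + s i * p i j)) * p i j := by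
      intro i
      rw [hΔ₁, hΔ, Matrix.smul_apply, Matrix.mul_apply]
      simp only [smul_eq_mul, Matrix.sub_apply, Matrix.map_apply, Matrix.transpose_apply]
      congr 1
      refine Finset.sum_congr rfl fun j _ => ?_
      rw [key s i j]
    simp only [hdiag, ContinuousLinearMap.smul_apply, ContinuousLinearMap.sum_apply,
      ContinuousLinearMap.proj_apply, smul_eq_mul, Finset.mul_sum, Finset.sum_mul]
    refine Finset.sum_congr rfl fun i _ => Finset.sum_congr rfl fun j _ => ?_
    ring
  rw [hfun, hLeq]
  exact hsum
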